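/- Let X and Y be compact Hausdorff topological spaces. Then the algebras C(X, ℂ) and C(Y, ℂ) of continuous complex-valued functions are isomorphic as ℂ-algebras if and only if X and Y are homeomorphic. -/
import Mathlib

open WeakDual WeakDual.CharacterSpace

/-- Precomposition with an algebra hom gives a continuous map on character spaces. -/
noncomputable def algCompContinuousMap {A B 𝕜 : Type*} [NontriviallyNormedField 𝕜]
    [NormedRing A] [NormedAlgebra 𝕜 A] [CompleteSpace A]
    [NormedRing B] [NormedAlgebra 𝕜 B] [CompleteSpace B]
    (ψ : A →ₐ[𝕜] B) : C(characterSpace 𝕜 B, characterSpace 𝕜 A) where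
  toFun φ := equivAlgHom.symm ((equivAlgHom φ).comp ψ)
  continuous_toFun :=
    Continuous.subtype_mk
      (continuous_of_continuous_eval fun a => map_continuous <| gelfandTransform 𝕜 B (ψ a)) _

theorem continuousMap_alg_iso_iff_homeomorph
    (X Y : Type*) [TopologicalSpace X] [CompactSpace X] [T2Space X]
    [TopologicalSpace Y] [CompactSpace Y] [T2Space Y] :
    Nonempty (C(X, ℂ) ≃ₐ[ℂ] C(Y, ℂ)) ↔ Nonempty (X ≃ₜ Y) := by
  constructor
  · rintro ⟨φ⟩
    refine ⟨(homeoEval X ℂ).trans <| Homeomorph.trans ?_ (homeoEval Y ℂ).symm⟩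
    exact
      { toFun := algCompContinuousMap φ.symm.toAlgHom
        invFun := algCompContinuousMap φ.toAlgHom
        left_inv := fun χ => Subtype.ext <| ContinuousLinearMap.ext fun a =>
          congrArg χ (φ.symm_apply_apply a)
        right_inv := fun χ => Subtype.ext <| ContinuousLinearMap.ext fun a =>
          congrArg χ (φ.apply_symm_apply a)
        continuous_toFun := (algCompContinuousMap φ.symm.toAlgHom).continuous
        continuous_invFun := (algCompContinuousMap φ.toAlgHom).continuous }
  · rintro ⟨f⟩
    exact ⟨AlgEquiv.ofAlgHom (ContinuousMap.compRightAlgHom ℂ ℂ (f.symm : C(Y, X)))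
      (ContinuousMap.compRightAlgHom ℂ ℂ (f : C(X, Y)))
      (by ext g y; simp [ContinuousMap.compRightAlgHom])
      (by ext g x; simp [ContinuousMap.compRightAlgHom])⟩
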